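/- (Massey's bound) Let p = (p_1,…,p_N) be a probability vector with Shannon entropy H = −Σ_{k : p_k > 0} p_k·log₂ p_k satisfying H ≥ 2. Then the guessing time satisfies G ≥ 2^H/4 + 1. -/

import Mathlib

open Finset

noncomputable def guess (N : ℕ) (q : Fin N → ℝ) : ℝ :=
  Finset.univ.inf' ⟨1, Finset.mem_univ 1⟩
    (fun σ : Equiv.Perm (Fin N) => ∑ k : Fin N, ((k : ℝ) + 1) * q (σ k))

noncomputable def guessA (N : ℕ) (q : Fin N → ℝ) (p : ℝ) (A : Finset (Fin N)) : ℝ :=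
  ∑ y : Bool, Finset.univ.inf' ⟨1, Finset.mem_univ 1⟩
    (fun σ : Equiv.Perm (Fin N) => ∑ k : Fin N,
      ((k : ℝ) + 1) * q (σ k) * (if ((σ k ∈ A) ↔ (y = true)) then 1 - p else p))

noncomputable def guessOpt (N : ℕ) (q : Fin N → ℝ) (p : ℝ) : ℝ :=
  Finset.univ.inf' ⟨∅, Finset.mem_univ ∅⟩ (fun A : Finset (Fin N) => guessA N q p A)

def zigzag (N : ℕ) : Finset (Fin N) := Finset.univ.filter (fun k => (k : ℕ) % 2 = 0)

noncomputable def wt (N : ℕ) (q : Fin N → ℝ) (p : ℝ) (i j : Fin N) : ℝ :=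
  max 0 ((1 - p) * min (q i) (q j) - p * max (q i) (q j))

noncomputable def cut (N : ℕ) (q : Fin N → ℝ) (p : ℝ) (A : Finset (Fin N)) : ℝ :=
  ∑ i ∈ A, ∑ j ∈ Aᶜ, wt N q p i j

noncomputable def maxcut (N : ℕ) (q : Fin N → ℝ) (p : ℝ) : ℝ :=
  Finset.univ.sup' ⟨∅, Finset.mem_univ ∅⟩ (fun A : Finset (Fin N) => cut N q p A)


lemma expbound (s : ℝ) (h0 : 0 ≤ s) (h1 : s ≤ 1/2) :
    Real.exp (-(2*Real.log 2) * s) ≤ 1 - s := by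
  have h := convexOn_exp.2 (Set.mem_univ (0:ℝ)) (Set.mem_univ (-Real.log 2))
    (by linarith : (0:ℝ) ≤ 1 - 2*s) (by linarith : (0:ℝ) ≤ 2*s) (by ring)
  simp only [smul_eq_mul] at h
  have e : (1-2*s)*0 + 2*s*(-Real.log 2) = -(2*Real.log 2) * s := by ring
  rw [e, Real.exp_zero, Real.exp_neg, Real.exp_log (by norm_num : (0:ℝ) < 2)] at h
  linarith

lemma keylog (G : ℝ) (hG : 2 ≤ G) :
    G * (Real.log G - Real.log (G-1)) ≤ 2 * Real.log 2 := by
  have hGpos : (0:ℝ) < G := by linarith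
  have hG1 : (0:ℝ) < G - 1 := by linarith
  have h := expbound (1/G) (by positivity) (one_div_le_one_div_of_le (by norm_num) hG)
  have h1G : 1 - 1/G = (G-1)/G := by field_simp
  rw [h1G] at h
  have hlog : -(2*Real.log 2) * (1/G) ≤ Real.log ((G-1)/G) :=
    (Real.le_log_iff_exp_le (by positivity)).mpr h
  rw [Real.log_div hG1.ne' hGpos.ne'] at hlog
  have h2 := mul_le_mul_of_nonneg_left hlog hGpos.le
  have e : G * (-(2*Real.log 2) * (1/G)) = -(2*Real.log 2) := by
    field_simp
  rw [e] at h2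
  have e2 : G * (Real.log (G-1) - Real.log G) = -(G * (Real.log G - Real.log (G-1))) := by ring
  linarith [e2 ▸ h2]

lemma gibbs (N : ℕ) (q : Fin N → ℝ) (hnn : ∀ i, 0 ≤ q i) (hsum : ∑ i, q i = 1)
    (t : ℝ) (ht0 : 0 < t) (ht1 : t < 1) :
    -∑ k : Fin N, q k * Real.logb 2 (q k) ≤
      -Real.logb 2 (1 - t) - Real.logb 2 t * (∑ k : Fin N, ((k : ℝ) + 1) * q k - 1) := by
  have hlog2 : (0:ℝ) < Real.log 2 := Real.log_pos (by norm_num)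
  have h1t : 0 < 1 - t := by linarith
  set r : Fin N → ℝ := fun k => (1 - t) * t ^ (k : ℕ) with hr
  have hrpos : ∀ k, 0 < r k := fun k => mul_pos h1t (pow_pos ht0 _)
  -- pointwise Gibbs
  have key : ∀ k, q k * Real.log (r k) - q k * Real.log (q k) ≤ r k - q k := by
    intro k
    rcases (hnn k).eq_or_lt with h | h
    · rw [← h]; simpa using (hrpos k).le
    · have hlog := Real.log_le_sub_one_of_pos (show 0 < r k / q k from div_pos (hrpos k) h)
      rw [Real.log_div (hrpos k).ne' h.ne'] at hlog
      have h2 := mul_le_mul_of_nonneg_left hlog h.le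
      have e : q k * (r k / q k - 1) = r k - q k := by field_simp
      nlinarith [h2]
  have sum_key : ∑ k, (q k * Real.log (r k) - q k * Real.log (q k)) ≤ ∑ k, (r k - q k) :=
    Finset.sum_le_sum (fun k _ => key k)
  have hsumr : ∑ k : Fin N, r k ≤ 1 := by
    have e1 : ∑ k : Fin N, r k = (1-t) * ∑ i ∈ Finset.range N, t ^ i := by
      rw [Finset.mul_sum, ← Fin.sum_univ_eq_sum_range (fun i => (1-t) * t ^ i) N]
    rw [e1, geom_sum_eq (by linarith : t ≠ 1) N]
    have hp : (0:ℝ) ≤ t ^ N := pow_nonneg ht0.le N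
    have ht1' : t - 1 ≠ 0 := by linarith
    have e2 : (1-t) * ((t ^ N - 1)/(t - 1)) = 1 - t ^ N := by
      field_simp
      ring
    rw [e2]; linarith
  rw [Finset.sum_sub_distrib, Finset.sum_sub_distrib, hsum] at sum_key
  -- compute ∑ q k * log (r k)
  have hek : ∀ k : Fin N, q k * Real.log (r k)
      = Real.log (1-t) * q k + Real.log t * ((k:ℝ) * q k) := by
    intro k
    rw [hr]
    rw [Real.log_mul h1t.ne' (pow_ne_zero _ ht0.ne'), Real.log_pow]
    ring
  have hsum2 : ∑ k : Fin N, (k:ℝ) * q k = (∑ k : Fin N, ((k:ℝ)+1) * q k) - 1 := by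
    have e : ∑ k : Fin N, ((k:ℝ)+1) * q k = (∑ k : Fin N, (k:ℝ) * q k) + ∑ k : Fin N, q k := by
      rw [← Finset.sum_add_distrib]
      exact Finset.sum_congr rfl (fun k _ => by ring)
    rw [e, hsum]; ring
  have hlogr : ∑ k, q k * Real.log (r k)
      = Real.log (1-t) + Real.log t * ((∑ k : Fin N, ((k:ℝ)+1) * q k) - 1) := by
    rw [Finset.sum_congr rfl (fun k _ => hek k), Finset.sum_add_distrib,
      ← Finset.mul_sum, ← Finset.mul_sum, hsum, hsum2, mul_one]
  rw [hlogr] at sum_key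
  -- translate to logb
  have elogb : ∀ x : Fin N → ℝ, -∑ k, x k * Real.logb 2 (x k)
      = (-∑ k, x k * Real.log (x k)) / Real.log 2 := by
    intro x
    rw [neg_div, Finset.sum_div]
    congr 1
    exact Finset.sum_congr rfl (fun k _ => by rw [Real.logb, mul_div_assoc])
  rw [elogb, Real.logb, Real.logb]
  have hRHS : -(Real.log (1-t)/Real.log 2) - (Real.log t/Real.log 2) * ((∑ k : Fin N, ((k:ℝ)+1) * q k) - 1)
      = (-Real.log (1-t) - Real.log t * ((∑ k : Fin N, ((k:ℝ)+1) * q k) - 1))/Real.log 2 := by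
    ring
  rw [hRHS, div_le_div_iff_of_pos_right hlog2]
  linarith [sum_key, hsumr]

theorem stmt_3 (N : ℕ) (pv : Fin N → ℝ)
    (hnn : ∀ i, 0 ≤ pv i) (hsum : ∑ i, pv i = 1)
    (H : ℝ)
    (hH : H = -∑ k ∈ Finset.univ.filter (fun k => 0 < pv k), pv k * Real.logb 2 (pv k))
    (hH2 : 2 ≤ H) :
    (2 : ℝ) ^ H / 4 + 1 ≤ guess N pv := by
  have hlog2 : (0:ℝ) < Real.log 2 := Real.log_pos (by norm_num)
  refine Finset.le_inf' _ _ (fun σ _ => ?_)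
  set q : Fin N → ℝ := fun k => pv (σ k) with hq
  have hqnn : ∀ i, 0 ≤ q i := fun i => hnn _
  have hqsum : ∑ i, q i = 1 := by rw [← hsum]; exact Equiv.sum_comp σ pv
  have hHq : H = -∑ k, q k * Real.logb 2 (q k) := by
    rw [hH]
    congr 1
    rw [Finset.sum_filter_of_ne (fun x _ hx => ?_),
      ← Equiv.sum_comp σ (fun k => pv k * Real.logb 2 (pv k))]
    rcases (hnn x).eq_or_lt with h | h
    · exact absurd (by rw [← h]; ring) hx
    · exact h
  set G := ∑ k : Fin N, ((k:ℝ)+1) * q k with hGdef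
  show (2:ℝ) ^ H / 4 + 1 ≤ G
  have hHG : H ≤ G := by
    have h1 := gibbs N q hqnn hqsum (1/2) (by norm_num) (by norm_num)
    rw [← hHq] at h1
    have e2 : Real.logb 2 (1/2 : ℝ) = -1 := by
      rw [one_div, Real.logb_inv, Real.logb_self_eq_one (by norm_num)]
    have e1 : Real.logb 2 (1 - 1/2 : ℝ) = -1 := by rw [show (1:ℝ) - 1/2 = 1/2 by norm_num]; exact e2
    rw [e1, e2] at h1
    linarith
  have hG2 : (2:ℝ) ≤ G := le_trans hH2 hHG
  have hG1 : (0:ℝ) < G - 1 := by linarith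
  have hGpos : (0:ℝ) < G := by linarith
  have ht0 : 0 < (G-1)/G := div_pos hG1 hGpos
  have ht1 : (G-1)/G < 1 := by rw [div_lt_one hGpos]; linarith
  have h2 := gibbs N q hqnn hqsum ((G-1)/G) ht0 ht1
  rw [← hHq] at h2
  have e2 : 1 - (G-1)/G = 1/G := by field_simp; ring
  rw [e2] at h2
  have key := keylog G hG2
  -- H ≤ logb 2 (4*(G-1))
  have hHb : H ≤ Real.logb 2 (4*(G-1)) := by
    have hlg : Real.log (1/G) = -Real.log G := by rw [one_div, Real.log_inv]
    have hlg2 : Real.log ((G-1)/G) = Real.log (G-1) - Real.log G :=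
      Real.log_div hG1.ne' hGpos.ne'
    have hlg3 : Real.log (4*(G-1)) = 2*Real.log 2 + Real.log (G-1) := by
      rw [Real.log_mul (by norm_num) hG1.ne', show (4:ℝ) = 2^2 by norm_num, Real.log_pow]
      push_cast; ring
    have h2' : H ≤ (Real.log G + (Real.log G - Real.log (G-1))*(G-1)) / Real.log 2 := by
      calc H ≤ -Real.logb 2 (1/G) - Real.logb 2 ((G-1)/G) * (G-1) := h2
        _ = (Real.log G + (Real.log G - Real.log (G-1))*(G-1)) / Real.log 2 := by
          rw [Real.logb, Real.logb, hlg, hlg2]; ring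
    have hnum : Real.log G + (Real.log G - Real.log (G-1))*(G-1)
        ≤ 2*Real.log 2 + Real.log (G-1) := by nlinarith [key]
    rw [Real.logb, hlg3]
    exact le_trans h2' ((div_le_div_iff_of_pos_right hlog2).mpr hnum)
  have h4 : (2:ℝ) ^ H ≤ 4*(G-1) := by
    calc (2:ℝ) ^ H ≤ (2:ℝ) ^ (Real.logb 2 (4*(G-1))) :=
      Real.rpow_le_rpow_of_exponent_le (by norm_num) hHb
    _ = 4*(G-1) := Real.rpow_logb (by norm_num) (by norm_num) (by linarith)
  linarith
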